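/- Let Q be a quandle and A a commutative ring. For every n ≥ 2, the boundary map satisfies ∂_n(C^D_n(Q;A)) ⊆ C^D_{n−1}(Q;A) (where C^D_1(Q;A) = 0); hence the degenerate chains form a subcomplex of the rack chain complex and the quotient modules C^Q_n(Q;A) inherit well-defined boundary maps. -/

import Mathlib

/-- A rack in the convention of the paper: two binary operations `◁` (`tri`) and
`◀` (`triInv`) that are mutually inverse on the right and right self-distributive. -/
class PaperRack (α : Type*) where
  tri : α → α → α
  triInv : α → α → α
  triInv_tri : ∀ a b, triInv (tri a b) b = a
  tri_triInv : ∀ a b, tri (triInv a b) b = a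
  tri_tri : ∀ a b c, tri (tri a b) c = tri (tri a c) (tri b c)

/-- A quandle: a rack whose operations are idempotent. -/
class PaperQuandle (α : Type*) extends PaperRack α where
  tri_self : ∀ a, tri a a = a
  triInv_self : ∀ a, triInv a a = a

open PaperRack

/-- The rack chain module `C^R_n(R; A)`: the free `A`-module on `n`-tuples of
elements of `R` (for `n = 0` this is free on the unique empty tuple, i.e. `A`). -/
abbrev RackChains (R A : Type*) [CommRing A] (n : ℕ) : Type _ := (Fin n → R) →₀ A

/-- The `i`-th "acted" face of a tuple: delete the `i`-th entry and act by it on all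
earlier entries: `(x₁ ◁ x_i, …, x_{i−1} ◁ x_i, x_{i+1}, …, xₙ)`. -/
def dTop {R : Type*} [PaperRack R] {m : ℕ} (i : Fin (m + 1)) (x : Fin (m + 1) → R) :
    Fin m → R :=
  fun j => if ((i.succAbove j : Fin (m + 1)) : ℕ) < (i : ℕ)
    then tri (x (i.succAbove j)) (x i) else x (i.succAbove j)

/-- The `i`-th "deleted" face of a tuple: `(x₁, …, x_{i−1}, x_{i+1}, …, xₙ)`. -/
def dBot {R : Type*} {m : ℕ} (i : Fin (m + 1)) (x : Fin (m + 1) → R) : Fin m → R :=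
  fun j => x (i.succAbove j)

/-- The boundary map `∂_{m+1} : C^R_{m+1}(R;A) → C^R_m(R;A)`; for `m + 1 ≥ 2` it is
`∂_n(x₁,…,xₙ) = Σ_{i=1}^{n} (−1)^{n−i} [(x₁◁x_i,…,x_{i−1}◁x_i,x_{i+1},…,xₙ)
− (x₁,…,x_{i−1},x_{i+1},…,xₙ)]`, and `∂₁(x) = 1`. -/
noncomputable def rackBoundary (R A : Type*) [PaperRack R] [CommRing A] :
    (m : ℕ) → RackChains R A (m + 1) →ₗ[A] RackChains R A m
  | 0 => Finsupp.lsum A fun _ =>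
      LinearMap.toSpanSingleton A _ (Finsupp.single (fun i : Fin 0 => i.elim0) (1 : A))
  | (m + 1) => Finsupp.lsum A fun x => LinearMap.toSpanSingleton A _
      (∑ i : Fin (m + 2), ((-1 : A) ^ (m + 1 - (i : ℕ))) •
        (Finsupp.single (dTop i x) (1 : A) - Finsupp.single (dBot i x) (1 : A)))

/-- The degenerate chains `C^D_n(Q;A)`: the span of the `n`-tuples having two equal
adjacent entries. -/
noncomputable def Degen (R A : Type*) [CommRing A] (n : ℕ) : Submodule A (RackChains R A n) :=
  Submodule.span A
    { c | ∃ x : Fin n → R,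
        (∃ i : ℕ, ∃ h : i + 1 < n, x ⟨i, by omega⟩ = x ⟨i + 1, h⟩) ∧
        c = Finsupp.single x (1 : A) }

section Aux

lemma succAbove_val' {m : ℕ} (i : Fin (m+1)) (j : Fin m) :
    ((i.succAbove j : Fin (m+1)) : ℕ) = if (j:ℕ) < (i:ℕ) then (j:ℕ) else (j:ℕ)+1 := by
  rw [Fin.succAbove]
  split_ifs with h1 h2 h2 <;>
    simp_all [Fin.lt_def, Fin.castSucc, Fin.succ, Fin.castAdd, Fin.castLE]

lemma dTop_eq {Q : Type*} [PaperRack Q] {m : ℕ} (i : Fin (m+1)) (x : Fin (m+1) → Q) (j : Fin m) :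
    dTop i x j = if h : (j:ℕ) < (i:ℕ) then tri (x ⟨j, by omega⟩) (x i)
      else x ⟨(j:ℕ)+1, by omega⟩ := by
  have hv := succAbove_val' i j
  unfold dTop
  by_cases h : (j:ℕ) < (i:ℕ)
  · rw [if_pos h] at hv
    rw [dif_pos h, if_pos (by omega)]
    exact congrArg (fun a => tri a (x i)) (congrArg x (Fin.ext hv))
  · rw [if_neg h] at hv
    rw [dif_neg h, if_neg (by omega)]
    exact congrArg x (Fin.ext hv)

lemma dBot_eq {Q : Type*} {m : ℕ} (i : Fin (m+1)) (x : Fin (m+1) → Q) (j : Fin m) :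
    dBot i x j = if h : (j:ℕ) < (i:ℕ) then x ⟨j, by omega⟩ else x ⟨(j:ℕ)+1, by omega⟩ := by
  have hv := succAbove_val' i j
  unfold dBot
  by_cases h : (j:ℕ) < (i:ℕ)
  · rw [if_pos h] at hv
    rw [dif_pos h]
    exact congrArg x (Fin.ext hv)
  · rw [if_neg h] at hv
    rw [dif_neg h]
    exact congrArg x (Fin.ext hv)

lemma xcongr {Q : Type*} {n : ℕ} (x : Fin n → Q) {a b : Fin n} (h : (a:ℕ) = (b:ℕ)) :
    x a = x b := congrArg x (Fin.ext h)

lemma single_mem_degen {Q A : Type*} [CommRing A] {n : ℕ} (y : Fin n → Q) (k : ℕ)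
    (h : k + 1 < n) (hy : y ⟨k, by omega⟩ = y ⟨k+1, h⟩) :
    Finsupp.single y (1:A) ∈ Degen Q A n :=
  Submodule.subset_span ⟨y, ⟨k, h, hy⟩, rfl⟩

end Aux

set_option maxHeartbeats 1000000 in
/-- For a quandle `Q`, `C^D_1(Q;A) = 0`, and for every `n ≥ 2` (here `n = m + 2`) the
boundary map sends degenerate chains to degenerate chains:
`∂_n(C^D_n(Q;A)) ⊆ C^D_{n−1}(Q;A)`. Hence the degenerate chains form a subcomplex and
the quotients `C^Q_n(Q;A)` inherit well-defined boundary maps. -/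
theorem degen_subcomplex (Q A : Type*) [PaperQuandle Q] [CommRing A] :
    Degen Q A 1 = ⊥ ∧
      ∀ m : ℕ, (Degen Q A (m + 2)).map (rackBoundary Q A (m + 1)) ≤ Degen Q A (m + 1) := by
  constructor
  · rw [eq_bot_iff, Degen, Submodule.span_le]
    rintro c ⟨x, ⟨i, h, -⟩, rfl⟩
    omega
  · intro m
    rw [Degen, Submodule.map_span, Submodule.span_le]
    rintro c ⟨c', ⟨x, ⟨k, hk, hx⟩, rfl⟩, rfl⟩
    have hkm : k < m + 2 := by omega
    set kF : Fin (m+2) := ⟨k, hkm⟩ with hkF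
    set kS : Fin (m+2) := ⟨k+1, hk⟩ with hkS
    have hb : rackBoundary Q A (m+1) (Finsupp.single x 1)
        = ∑ i : Fin (m+2), ((-1:A)^(m+1-(i:ℕ))) •
          (Finsupp.single (dTop i x) (1:A) - Finsupp.single (dBot i x) 1) := by
      simp [rackBoundary, Finsupp.lsum_single, LinearMap.toSpanSingleton_apply]
    rw [SetLike.mem_coe, hb]
    set f : Fin (m+2) → RackChains Q A (m+1) := fun i =>
      ((-1:A)^(m+1-(i:ℕ))) • (Finsupp.single (dTop i x) (1:A) - Finsupp.single (dBot i x) 1)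
      with hf
    have hne : kF ≠ kS := by simp [hkF, hkS, Fin.ext_iff]
    have hsplit : ∑ i, f i = (∑ i ∈ Finset.univ \ {kF, kS}, f i) + ∑ i ∈ ({kF, kS} : Finset _), f i :=
      (Finset.sum_sdiff (Finset.subset_univ _)).symm
    -- the two face terms at `k` and `k+1` cancel
    have hT : dTop kF x = dTop kS x := by
      funext j
      rw [dTop_eq, dTop_eq]
      rcases lt_trichotomy (j:ℕ) k with h1 | h1 | h1
      · rw [dif_pos (show (j:ℕ) < k from h1), dif_pos (show (j:ℕ) < k+1 by omega)]
        rw [hx]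
      · rw [dif_neg (show ¬ (j:ℕ) < k by omega), dif_pos (show (j:ℕ) < k+1 by omega)]
        have e1 : x ⟨(j:ℕ)+1, by omega⟩ = x kS := xcongr x (by simp [hkS, h1])
        have e2 : x ⟨(j:ℕ), by omega⟩ = x kS := (xcongr x (by simp [hkF, h1])).trans hx
        rw [e1, e2, PaperQuandle.tri_self]
      · rw [dif_neg (show ¬ (j:ℕ) < k by omega), dif_neg (show ¬ (j:ℕ) < k+1 by omega)]
    have hB : dBot kF x = dBot kS x := by
      funext j
      rw [dBot_eq, dBot_eq]
      rcases lt_trichotomy (j:ℕ) k with h1 | h1 | h1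
      · rw [dif_pos (show (j:ℕ) < k from h1), dif_pos (show (j:ℕ) < k+1 by omega)]
      · rw [dif_neg (show ¬ (j:ℕ) < k by omega), dif_pos (show (j:ℕ) < k+1 by omega)]
        exact ((xcongr x (by simp [hkS, h1])).trans hx.symm).trans
          (xcongr x (by simp [hkF, h1]))
      · rw [dif_neg (show ¬ (j:ℕ) < k by omega), dif_neg (show ¬ (j:ℕ) < k+1 by omega)]
    have hsign : ((-1:A))^(m+1 - (kF:ℕ)) = -((-1:A))^(m+1 - (kS:ℕ)) := by
      have h1 : m+1 - (kF:ℕ) = (m+1 - (kS:ℕ)) + 1 := by simp [hkF, hkS]; omega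
      rw [h1, pow_succ]; ring
    have hcancel : ∑ i ∈ ({kF, kS} : Finset (Fin (m+2))), f i = 0 := by
      rw [Finset.sum_pair hne, hf]
      simp only [hT, hB, hsign]
      rw [neg_smul, neg_add_cancel]
    rw [hsplit, hcancel, add_zero]
    refine Submodule.sum_mem _ ?_
    intro i hi
    simp only [Finset.mem_sdiff, Finset.mem_univ, true_and, Finset.mem_insert,
      Finset.mem_singleton, not_or] at hi
    have hik : (i:ℕ) ≠ k := fun h => hi.1 (Fin.ext h)
    have hik1 : (i:ℕ) ≠ k + 1 := fun h => hi.2 (Fin.ext h)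
    refine Submodule.smul_mem _ _ (Submodule.sub_mem _ ?_ ?_)
    · -- dTop i x is degenerate
      by_cases hlt : (i:ℕ) < k
      · refine single_mem_degen _ (k-1) (by omega) ?_
        rw [dTop_eq, dTop_eq,
          dif_neg (show ¬ ((⟨k-1, by omega⟩ : Fin (m+1)):ℕ) < (i:ℕ) by simp; omega),
          dif_neg (show ¬ ((⟨k-1+1, by omega⟩ : Fin (m+1)):ℕ) < (i:ℕ) by simp; omega)]
        exact ((xcongr x (by simp [hkF]; omega)).trans hx).trans
          (xcongr x (by simp [hkS]; omega))
      · have hgt : k + 1 < (i:ℕ) := by omega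
        refine single_mem_degen _ k (by omega) ?_
        rw [dTop_eq, dTop_eq,
          dif_pos (show ((⟨k, by omega⟩ : Fin (m+1)):ℕ) < (i:ℕ) by simp; omega),
          dif_pos (show ((⟨k+1, by omega⟩ : Fin (m+1)):ℕ) < (i:ℕ) by simp; omega)]
        exact congrArg (fun a => tri a (x i))
          (((xcongr x (by simp [hkF])).trans hx).trans (xcongr x (by simp [hkS])))
    · -- dBot i x is degenerate
      by_cases hlt : (i:ℕ) < k
      · refine single_mem_degen _ (k-1) (by omega) ?_
        rw [dBot_eq, dBot_eq,
          dif_neg (show ¬ ((⟨k-1, by omega⟩ : Fin (m+1)):ℕ) < (i:ℕ) by simp; omega),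
          dif_neg (show ¬ ((⟨k-1+1, by omega⟩ : Fin (m+1)):ℕ) < (i:ℕ) by simp; omega)]
        exact ((xcongr x (by simp [hkF]; omega)).trans hx).trans
          (xcongr x (by simp [hkS]; omega))
      · have hgt : k + 1 < (i:ℕ) := by omega
        refine single_mem_degen _ k (by omega) ?_
        rw [dBot_eq, dBot_eq,
          dif_pos (show ((⟨k, by omega⟩ : Fin (m+1)):ℕ) < (i:ℕ) by simp; omega),
          dif_pos (show ((⟨k+1, by omega⟩ : Fin (m+1)):ℕ) < (i:ℕ) by simp; omega)]
        exact ((xcongr x (by simp [hkF])).trans hx).trans (xcongr x (by simp [hkS]))
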